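/- arXiv:1906.00506 — 3 statements merged into one kernel-verified Lean document; each statement's English description precedes it below -/
import Mathlib

section
/- Under the same assumptions, with M := ∇²f(x*)^{-1/2}, one has ‖M y − M⁻¹ s‖ / ‖M⁻¹ s‖ ≤ (L̃/μ) · max{‖z − x*‖, ‖z' − x*‖}. In particular, if max{‖z − x*‖, ‖z' − x*‖} < μ/(3L̃), then ‖M y − M⁻¹ s‖ ≤ (1/3)‖M⁻¹ s‖. -/
open scoped RealInnerProductSpace

/-- With `M = ∇²f(x*)^{-1/2}` (inverse of the positive square root `R`),
`‖M y − M⁻¹ s‖ / ‖M⁻¹ s‖ ≤ (L̃/μ) max{‖z − x*‖, ‖z' − x*‖}`; in particular if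
`max{‖z − x*‖, ‖z' − x*‖} < μ/(3L̃)` then `‖M y − M⁻¹ s‖ ≤ (1/3)‖M⁻¹ s‖`. -/
theorem weighted_secant_bound (p : ℕ)
    (f : EuclideanSpace ℝ (Fin p) → ℝ) (μ Lt : ℝ) (hμ : 0 < μ) (hLt : 0 < Lt)
    (hf : ContDiff ℝ 2 f)
    (hsc : ∀ x v : EuclideanSpace ℝ (Fin p),
      μ * ‖v‖ ^ 2 ≤ ⟪fderiv ℝ (gradient f) x v, v⟫)
    (hLip : ∀ x y : EuclideanSpace ℝ (Fin p),
      ‖fderiv ℝ (gradient f) x - fderiv ℝ (gradient f) y‖ ≤ Lt * ‖x - y‖)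
    (xstar z z' : EuclideanSpace ℝ (Fin p)) (hs : z' - z ≠ 0)
    (R M : EuclideanSpace ℝ (Fin p) →L[ℝ] EuclideanSpace ℝ (Fin p))
    (hRsa : IsSelfAdjoint R)
    (hRpos : ∀ v : EuclideanSpace ℝ (Fin p), 0 ≤ ⟪R v, v⟫)
    (hRsq : R * R = fderiv ℝ (gradient f) xstar)
    (hMR : M * R = 1) (hRM : R * M = 1) :
    ‖M (gradient f z' - gradient f z) - R (z' - z)‖ / ‖R (z' - z)‖
        ≤ (Lt / μ) * max ‖z - xstar‖ ‖z' - xstar‖ ∧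
      (max ‖z - xstar‖ ‖z' - xstar‖ < μ / (3 * Lt) →
        ‖M (gradient f z' - gradient f z) - R (z' - z)‖
          ≤ (1 / 3) * ‖R (z' - z)‖) := by
  set H := fderiv ℝ (gradient f) with hH
  set s := z' - z with hsdef
  set D := max ‖z - xstar‖ ‖z' - xstar‖ with hDdef
  have hD0 : 0 ≤ D := le_trans (norm_nonneg _) (le_max_left _ _)
  have hsqrtμ : 0 < Real.sqrt μ := Real.sqrt_pos.2 hμ
  -- gradient is differentiable
  have hgradC : ContDiff ℝ 1 (gradient f) := by
    have h1 : ContDiff ℝ 1 (fderiv ℝ f) := hf.fderiv_right (by norm_num)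
    have : gradient f = fun x => (InnerProductSpace.toDual ℝ (EuclideanSpace ℝ (Fin p))).symm (fderiv ℝ f x) := rfl
    rw [this]
    exact (InnerProductSpace.toDual ℝ (EuclideanSpace ℝ (Fin p))).symm.contDiff.comp h1
  have hgrad : Differentiable ℝ (gradient f) := hgradC.differentiable one_ne_zero
  -- lower bound for R
  have hRlow : ∀ u, Real.sqrt μ * ‖u‖ ≤ ‖R u‖ := by
    intro u
    have h1 : μ * ‖u‖ ^ 2 ≤ ⟪H xstar u, u⟫ := hsc xstar u
    have h2 : H xstar u = R (R u) := by rw [← hRsq]; rfl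
    have h3 : ⟪R (R u), u⟫ = ⟪R u, R u⟫ := hRsa.isSymmetric (R u) u
    have h4 : μ * ‖u‖ ^ 2 ≤ ‖R u‖ ^ 2 := by
      rw [h2, h3, real_inner_self_eq_norm_sq] at h1; exact h1
    nlinarith [norm_nonneg (R u), norm_nonneg u, Real.sq_sqrt hμ.le,
      Real.sqrt_nonneg μ, mul_self_nonneg (Real.sqrt μ * ‖u‖ - ‖R u‖)]
  -- ‖M w‖ ≤ ‖w‖ / √μ
  have hMbd : ∀ w, Real.sqrt μ * ‖M w‖ ≤ ‖w‖ := by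
    intro w
    have := hRlow (M w)
    have h2 : R (M w) = w := by
      have : (R * M) w = w := by rw [hRM]; rfl
      exact this
    rwa [h2] at this
  have hsne : ‖s‖ ≠ 0 := norm_ne_zero_iff.2 hs
  have hspos : 0 < ‖s‖ := (norm_pos_iff).2 hs
  have hRspos : 0 < ‖R s‖ := lt_of_lt_of_le (by positivity) (hRlow s)
  -- mean value estimate
  have hseg : segment ℝ z z' ⊆ Metric.closedBall xstar D := by
    apply (convex_closedBall xstar D).segment_subset
    · simp [Metric.mem_closedBall, dist_eq_norm]; exact le_max_left _ _
    · simp [Metric.mem_closedBall, dist_eq_norm]; exact le_max_right _ _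
  have key : ‖(gradient f z' - H xstar z') - (gradient f z - H xstar z)‖ ≤ Lt * D * ‖s‖ := by
    have := (convex_segment z z').norm_image_sub_le_of_norm_hasFDerivWithin_le
      (f := fun x => gradient f x - H xstar x) (f' := fun x => H x - H xstar)
      (C := Lt * D) (x := z) (y := z')
      (fun x _ => (((hgrad x).hasFDerivAt).sub ((H xstar).hasFDerivAt)).hasFDerivWithinAt)
      (fun x hx => by
        have hx' : ‖x - xstar‖ ≤ D := by
          have := hseg hx; simpa [Metric.mem_closedBall, dist_eq_norm] using this
        calc ‖H x - H xstar‖ ≤ Lt * ‖x - xstar‖ := hLip x xstar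
          _ ≤ Lt * D := by nlinarith)
      (left_mem_segment ℝ z z') (right_mem_segment ℝ z z')
    simpa [hsdef] using this
  have key2 : ‖(gradient f z' - gradient f z) - H xstar s‖ ≤ Lt * D * ‖s‖ := by
    have : (gradient f z' - gradient f z) - H xstar s
        = (gradient f z' - H xstar z') - (gradient f z - H xstar z) := by
      rw [hsdef, map_sub]; abel
    rw [this]; exact key
  -- M (H xstar s) = R s
  have hMHs : M (H xstar s) = R s := by
    rw [← hRsq]
    show M (R (R s)) = R s
    have : (M * R) (R s) = R s := by rw [hMR]; rfl
    exact this
  have hMain : Real.sqrt μ * ‖M (gradient f z' - gradient f z) - R s‖ ≤ Lt * D * ‖s‖ := by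
    have h1 : M (gradient f z' - gradient f z) - R s
        = M ((gradient f z' - gradient f z) - H xstar s) := by
      rw [map_sub M (gradient f z' - gradient f z) (H xstar s), hMHs]
    rw [h1]
    exact le_trans (hMbd _) key2
  have hFinal : ‖M (gradient f z' - gradient f z) - R s‖ ≤ Lt / μ * D * ‖R s‖ := by
    rw [div_mul_eq_mul_div, div_mul_eq_mul_div, le_div_iff₀ hμ]
    have h2 := mul_le_mul_of_nonneg_left hMain hsqrtμ.le
    have h3 := mul_le_mul_of_nonneg_left (hRlow s) (by positivity : (0:ℝ) ≤ Lt * D)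
    have h4 : Real.sqrt μ * Real.sqrt μ = μ := Real.mul_self_sqrt hμ.le
    nlinarith [norm_nonneg (M (gradient f z' - gradient f z) - R s)]
  constructor
  · rw [div_le_iff₀ hRspos]
    calc ‖M (gradient f z' - gradient f z) - R s‖ ≤ Lt / μ * D * ‖R s‖ := hFinal
      _ = Lt / μ * D * ‖R s‖ := rfl
  · intro hDlt
    have h5 : Lt / μ * D * ‖R s‖ ≤ 1 / 3 * ‖R s‖ := by
      rw [div_mul_eq_mul_div, div_mul_eq_mul_div, div_le_iff₀ hμ]
      have h6 : D ≤ μ / (3 * Lt) := hDlt.le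
      rw [le_div_iff₀ (by positivity)] at h6
      nlinarith
    exact le_trans hFinal h5
end

section
/- Suppose B₁,…,Bₙ are symmetric p×p matrices, H₁,…,Hₙ are symmetric positive definite matrices with ‖((1/n)∑Hᵢ)⁻¹‖ ≤ γ, and ‖Bᵢ − Hᵢ‖ ≤ ηδ for all i, with ηδγ(1+r) ≤ r for some r ∈ (0,1). Then (1/n)∑Bᵢ is invertible and ‖((1/n)∑Bᵢ)⁻¹‖ ≤ (1+r)γ. -/
open scoped RealInnerProductSpace

set_option maxHeartbeats 800000

/-- Norm bound for the inverse of `1 - x` in a complete normed ring with `‖1‖ ≤ 1`. -/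
lemma norm_inverse_one_sub_le {R : Type*} [NormedRing R] [CompleteSpace R]
    (hone : ‖(1 : R)‖ ≤ 1) {x : R} (hx : ‖x‖ < 1) :
    ‖Ring.inverse (1 - x)‖ ≤ (1 - ‖x‖)⁻¹ := by
  rw [← geom_series_eq_inverse x hx]
  have hsum : HasSum (fun i : ℕ => ‖x‖ ^ i) (1 - ‖x‖)⁻¹ :=
    hasSum_geometric_of_lt_one (norm_nonneg x) hx
  refine tsum_of_norm_bounded hsum fun i => ?_
  cases i with
  | zero => simpa using hone
  | succ k => exact (norm_pow_le' x k.succ_pos)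

/-- If `‖((1/n)∑Hᵢ)⁻¹‖ ≤ γ` for symmetric positive definite `Hᵢ`, and symmetric `Bᵢ`
satisfy `‖Bᵢ − Hᵢ‖ ≤ ηδ` with `ηδγ(1+r) ≤ r`, `r ∈ (0,1)`, then `(1/n)∑Bᵢ` is
invertible with `‖((1/n)∑Bᵢ)⁻¹‖ ≤ (1+r)γ`. -/
theorem average_hessian_approx_invertible (p n : ℕ) (hn : 0 < n)
    (B H : Fin n → (EuclideanSpace ℝ (Fin p) →L[ℝ] EuclideanSpace ℝ (Fin p)))
    (γ η δ r : ℝ) (hγ : 0 < γ) (hη : 0 < η) (hδ : 0 < δ)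
    (hr0 : 0 < r) (hr1 : r < 1)
    (hBsym : ∀ i, IsSelfAdjoint (B i))
    (hHsym : ∀ i, IsSelfAdjoint (H i))
    (hHpos : ∀ i, ∀ x : EuclideanSpace ℝ (Fin p), x ≠ 0 → 0 < ⟪(H i) x, x⟫)
    (hHunit : IsUnit ((1 / (n : ℝ)) • ∑ i, H i))
    (hHinv : ‖Ring.inverse ((1 / (n : ℝ)) • ∑ i, H i)‖ ≤ γ)
    (hBH : ∀ i, ‖B i - H i‖ ≤ η * δ)
    (hsmall : η * δ * γ * (1 + r) ≤ r) :
    IsUnit ((1 / (n : ℝ)) • ∑ i, B i) ∧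
      ‖Ring.inverse ((1 / (n : ℝ)) • ∑ i, B i)‖ ≤ (1 + r) * γ := by
  set A : EuclideanSpace ℝ (Fin p) →L[ℝ] EuclideanSpace ℝ (Fin p) :=
    (1 / (n : ℝ)) • ∑ i, H i with hA
  set Bbar : EuclideanSpace ℝ (Fin p) →L[ℝ] EuclideanSpace ℝ (Fin p) :=
    (1 / (n : ℝ)) • ∑ i, B i with hBbar
  obtain ⟨u, hu⟩ := hHunit
  have huinv : (↑u⁻¹ : EuclideanSpace ℝ (Fin p) →L[ℝ] EuclideanSpace ℝ (Fin p))
      = Ring.inverse A := by rw [← hu, Ring.inverse_unit]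
  have huinv_norm : ‖(↑u⁻¹ : EuclideanSpace ℝ (Fin p) →L[ℝ] EuclideanSpace ℝ (Fin p))‖ ≤ γ := by
    rw [huinv]; exact hHinv
  set t : EuclideanSpace ℝ (Fin p) →L[ℝ] EuclideanSpace ℝ (Fin p) := A - Bbar with ht
  have htnorm : ‖t‖ ≤ η * δ := by
    have heq : t = (1 / (n : ℝ)) • ∑ i, (H i - B i) := by
      rw [ht, hA, hBbar, Finset.sum_sub_distrib, smul_sub]
    refine heq ▸ (ContinuousLinearMap.opNorm_smul_le _ _).trans ?_
    have h1 : ‖∑ i, (H i - B i)‖ ≤ ∑ i : Fin n, (η * δ) := by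
      refine (norm_sum_le _ _).trans (Finset.sum_le_sum fun i _ => ?_)
      rw [norm_sub_rev]; exact hBH i
    have hn' : (0:ℝ) < (n:ℝ) := by exact_mod_cast hn
    have h2 : ‖(1 / (n : ℝ))‖ = 1 / (n : ℝ) := by
      rw [Real.norm_eq_abs, abs_of_pos]; positivity
    rw [h2]
    calc 1 / (n : ℝ) * ‖∑ i, (H i - B i)‖ ≤ 1 / (n : ℝ) * (∑ i : Fin n, (η * δ)) := by
          apply mul_le_mul_of_nonneg_left h1; positivity
      _ = η * δ := by
          rw [Finset.sum_const, Finset.card_univ, Fintype.card_fin, nsmul_eq_mul]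
          field_simp
  have hγηδ : γ * (η * δ) ≤ r / (1 + r) := by
    rw [le_div_iff₀ (by linarith)]; nlinarith
  have hxbound : ‖(↑u⁻¹ : EuclideanSpace ℝ (Fin p) →L[ℝ] EuclideanSpace ℝ (Fin p)) * t‖
      ≤ r / (1 + r) := by
    calc ‖(↑u⁻¹ : EuclideanSpace ℝ (Fin p) →L[ℝ] EuclideanSpace ℝ (Fin p)) * t‖
        ≤ ‖(↑u⁻¹ : EuclideanSpace ℝ (Fin p) →L[ℝ] EuclideanSpace ℝ (Fin p))‖ * ‖t‖ :=
          norm_mul_le _ _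
      _ ≤ γ * (η * δ) := mul_le_mul huinv_norm htnorm (norm_nonneg _) hγ.le
      _ ≤ r / (1 + r) := hγηδ
  have hrr : r / (1 + r) < 1 := by
    rw [div_lt_one (by linarith)]; linarith
  have hx : ‖(↑u⁻¹ : EuclideanSpace ℝ (Fin p) →L[ℝ] EuclideanSpace ℝ (Fin p)) * t‖ < 1 :=
    lt_of_le_of_lt hxbound hrr
  set x : EuclideanSpace ℝ (Fin p) →L[ℝ] EuclideanSpace ℝ (Fin p) := ↑u⁻¹ * t with hxdef
  have hfact : Bbar = ↑u * (1 - x) := by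
    rw [hxdef, mul_sub, mul_one, ← mul_assoc, u.mul_inv, one_mul, hu, ht]
    abel
  set w := Units.oneSub x hx with hw
  have hBunit : IsUnit Bbar := hfact ▸ ⟨u * w, rfl⟩
  refine ⟨hBunit, ?_⟩
  have hinv : Ring.inverse Bbar = (↑w⁻¹ : EuclideanSpace ℝ (Fin p) →L[ℝ] EuclideanSpace ℝ (Fin p)) * ↑u⁻¹ := by
    have huw : Bbar = ↑(u * w) := hfact
    rw [huw, Ring.inverse_unit, mul_inv_rev, Units.val_mul]
  have hone : ‖(1 : EuclideanSpace ℝ (Fin p) →L[ℝ] EuclideanSpace ℝ (Fin p))‖ ≤ 1 :=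
    ContinuousLinearMap.norm_id_le
  have hwinv : ‖(↑w⁻¹ : EuclideanSpace ℝ (Fin p) →L[ℝ] EuclideanSpace ℝ (Fin p))‖ ≤ (1 - ‖x‖)⁻¹ := by
    have hwe : (↑w⁻¹ : EuclideanSpace ℝ (Fin p) →L[ℝ] EuclideanSpace ℝ (Fin p))
        = Ring.inverse (1 - x) := by
      rw [← Ring.inverse_unit w, Units.val_oneSub]
    rw [hwe]
    exact norm_inverse_one_sub_le hone hx
  have hxinv : (1 - ‖x‖)⁻¹ ≤ 1 + r := by
    have h2 : (0:ℝ) < 1 - ‖x‖ := by linarith [lt_of_le_of_lt hxbound hrr]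
    rw [inv_le_comm₀ h2 (by linarith)]
    have h3 : (1 + r)⁻¹ = 1 - r / (1 + r) := by field_simp; ring
    rw [h3]
    have : ‖x‖ ≤ r / (1 + r) := hxbound
    linarith
  rw [hinv]
  calc ‖(↑w⁻¹ : EuclideanSpace ℝ (Fin p) →L[ℝ] EuclideanSpace ℝ (Fin p)) * ↑u⁻¹‖
      ≤ ‖(↑w⁻¹ : EuclideanSpace ℝ (Fin p) →L[ℝ] EuclideanSpace ℝ (Fin p))‖ * ‖(↑u⁻¹ : EuclideanSpace ℝ (Fin p) →L[ℝ] EuclideanSpace ℝ (Fin p))‖ := norm_mul_le _ _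
    _ ≤ (1 + r) * γ := mul_le_mul (hwinv.trans hxinv) huinv_norm (norm_nonneg _) (by linarith)
end

section
/- Let x* ∈ ℝᵖ, z₁,…,zₙ ∈ ℝᵖ, let Hᵢ = ∇²fᵢ(x*) for μ-strongly convex, L̃-Hessian-Lipschitz functions fᵢ with common minimizer structure ∑∇fᵢ(x*) = 0, and B₁,…,Bₙ symmetric matrices with B := (1/n)∑Bᵢ invertible, Γ := ‖B⁻¹‖. Define x := B⁻¹((1/n)∑Bᵢzᵢ − (1/n)∑∇fᵢ(zᵢ)). Then ‖x − x*‖ ≤ (L̃Γ/n)∑ᵢ‖zᵢ − x*‖² + (Γ/n)∑ᵢ‖(Bᵢ − Hᵢ)(zᵢ − x*)‖. -/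
open scoped RealInnerProductSpace

/-- Bound for the DAve-QN master iterate:
`‖x − x*‖ ≤ (L̃Γ/n)∑‖zᵢ − x*‖² + (Γ/n)∑‖(Bᵢ − Hᵢ)(zᵢ − x*)‖` where
`x = B⁻¹((1/n)∑Bᵢzᵢ − (1/n)∑∇fᵢ(zᵢ))`, `B = (1/n)∑Bᵢ`, `Γ = ‖B⁻¹‖`,
`Hᵢ = ∇²fᵢ(x*)` and `(1/n)∑∇fᵢ(x*) = 0`. -/
theorem dave_qn_iterate_bound (p n : ℕ) (hn : 0 < n)
    (f : Fin n → EuclideanSpace ℝ (Fin p) → ℝ) (μ Lt : ℝ) (hμ : 0 < μ) (hLt : 0 < Lt)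
    (hf : ∀ i, ContDiff ℝ 2 (f i))
    (hsc : ∀ i, ∀ x v : EuclideanSpace ℝ (Fin p),
      μ * ‖v‖ ^ 2 ≤ ⟪fderiv ℝ (gradient (f i)) x v, v⟫)
    (hLip : ∀ i, ∀ x y : EuclideanSpace ℝ (Fin p),
      ‖fderiv ℝ (gradient (f i)) x - fderiv ℝ (gradient (f i)) y‖ ≤ Lt * ‖x - y‖)
    (xstar : EuclideanSpace ℝ (Fin p))
    (hopt : (1 / (n : ℝ)) • ∑ i, gradient (f i) xstar = 0)
    (z : Fin n → EuclideanSpace ℝ (Fin p))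
    (B : Fin n → (EuclideanSpace ℝ (Fin p) →L[ℝ] EuclideanSpace ℝ (Fin p)))
    (hBsym : ∀ i, IsSelfAdjoint (B i))
    (hBunit : IsUnit ((1 / (n : ℝ)) • ∑ i, B i))
    (x : EuclideanSpace ℝ (Fin p))
    (hx : x = (Ring.inverse ((1 / (n : ℝ)) • ∑ i, B i))
      ((1 / (n : ℝ)) • ∑ i, (B i) (z i) - (1 / (n : ℝ)) • ∑ i, gradient (f i) (z i))) :
    ‖x - xstar‖
      ≤ (Lt * ‖Ring.inverse ((1 / (n : ℝ)) • ∑ i, B i)‖ / n) * ∑ i, ‖z i - xstar‖ ^ 2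
        + (‖Ring.inverse ((1 / (n : ℝ)) • ∑ i, B i)‖ / n) *
            ∑ i, ‖(B i - fderiv ℝ (gradient (f i)) xstar) (z i - xstar)‖ := by
  set A : EuclideanSpace ℝ (Fin p) →L[ℝ] EuclideanSpace ℝ (Fin p) :=
    (1 / (n : ℝ)) • ∑ i, B i with hA
  set Ainv := Ring.inverse A with hAinvdef
  -- differentiability of gradients
  have hdiff : ∀ i, Differentiable ℝ (gradient (f i)) := by
    intro i
    have h1 : ContDiff ℝ 1 (fderiv ℝ (f i)) := (hf i).fderiv_right (by norm_num)
    have : gradient (f i) = fun y => (InnerProductSpace.toDual ℝ (EuclideanSpace ℝ (Fin p))).symm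
        (fderiv ℝ (f i) y) := rfl
    rw [this]
    exact (InnerProductSpace.toDual ℝ (EuclideanSpace ℝ (Fin p))).symm.toContinuousLinearEquiv.differentiable.comp
      (h1.differentiable one_ne_zero)
  -- Taylor bound for each i
  have key : ∀ i, ‖gradient (f i) (z i) - gradient (f i) xstar
      - fderiv ℝ (gradient (f i)) xstar (z i - xstar)‖ ≤ Lt * ‖z i - xstar‖ ^ 2 := by
    intro i
    have hseg : ∀ w ∈ segment ℝ xstar (z i), ‖w - xstar‖ ≤ ‖z i - xstar‖ := by
      intro w hw
      rw [segment_eq_image'] at hw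
      obtain ⟨t, ⟨ht0, ht1⟩, rfl⟩ := hw
      simp only [add_sub_cancel_left, norm_smul, Real.norm_eq_abs, abs_of_nonneg ht0]
      nlinarith [norm_nonneg (z i - xstar)]
    have := Convex.norm_image_sub_le_of_norm_fderiv_le'
      (f := gradient (f i)) (φ := fderiv ℝ (gradient (f i)) xstar)
      (C := Lt * ‖z i - xstar‖) (s := segment ℝ xstar (z i))
      (fun w _ => (hdiff i).differentiableAt)
      (fun w hw => le_trans (hLip i w xstar)
        (mul_le_mul_of_nonneg_left (hseg w hw) hLt.le))
      (convex_segment _ _) (left_mem_segment ℝ _ _) (right_mem_segment ℝ _ _)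
    calc ‖gradient (f i) (z i) - gradient (f i) xstar
        - fderiv ℝ (gradient (f i)) xstar (z i - xstar)‖
        ≤ Lt * ‖z i - xstar‖ * ‖z i - xstar‖ := this
      _ = Lt * ‖z i - xstar‖ ^ 2 := by ring
  -- rewrite x - xstar
  have hAinvA : ∀ v : EuclideanSpace ℝ (Fin p), Ainv (A v) = v := by
    intro v
    have h := Ring.inverse_mul_cancel A hBunit
    have : (Ainv * A) v = v := by rw [h]; rfl
    simpa [ContinuousLinearMap.mul_apply] using this
  have hxx : x - xstar = Ainv ((1 / (n : ℝ)) •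
      ∑ i, (B i (z i - xstar) - (gradient (f i) (z i) - gradient (f i) xstar))) := by
    rw [hx]
    have hx2 : xstar = Ainv (A xstar) := (hAinvA xstar).symm
    nth_rewrite 1 [hx2]
    rw [← map_sub]
    congr 1
    have hAx : A xstar = (1 / (n : ℝ)) • ∑ i, B i xstar := by
      simp [hA, ContinuousLinearMap.smul_apply, ContinuousLinearMap.sum_apply]
    rw [hAx]
    have : ∑ i, (B i (z i - xstar) - (gradient (f i) (z i) - gradient (f i) xstar))
        = ∑ i, B i (z i) - ∑ i, B i xstar - (∑ i, gradient (f i) (z i)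
          - ∑ i, gradient (f i) xstar) := by
      rw [← Finset.sum_sub_distrib, ← Finset.sum_sub_distrib, ← Finset.sum_sub_distrib]
      exact Finset.sum_congr rfl fun i _ => by rw [map_sub]
    rw [this, smul_sub, smul_sub, smul_sub, hopt]
    abel_nf
  -- norm estimates
  have hn' : (0 : ℝ) < n := by exact_mod_cast hn
  have step1 : ‖x - xstar‖ ≤ ‖Ainv‖ * ((1 / (n : ℝ)) *
      ∑ i, ‖B i (z i - xstar) - (gradient (f i) (z i) - gradient (f i) xstar)‖) := by
    rw [hxx]
    calc ‖Ainv ((1 / (n : ℝ)) •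
        ∑ i, (B i (z i - xstar) - (gradient (f i) (z i) - gradient (f i) xstar)))‖
        ≤ ‖Ainv‖ * ‖(1 / (n : ℝ)) •
          ∑ i, (B i (z i - xstar) - (gradient (f i) (z i) - gradient (f i) xstar))‖ :=
          Ainv.le_opNorm _
      _ ≤ ‖Ainv‖ * ((1 / (n : ℝ)) *
          ∑ i, ‖B i (z i - xstar) - (gradient (f i) (z i) - gradient (f i) xstar)‖) := by
          gcongr
          rw [norm_smul]
          gcongr
          · simp [abs_of_nonneg (by positivity : (0:ℝ) ≤ 1 / (n:ℝ))]
          · exact norm_sum_le _ _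
  have step2 : ∀ i, ‖B i (z i - xstar) - (gradient (f i) (z i) - gradient (f i) xstar)‖
      ≤ Lt * ‖z i - xstar‖ ^ 2
        + ‖(B i - fderiv ℝ (gradient (f i)) xstar) (z i - xstar)‖ := by
    intro i
    have : B i (z i - xstar) - (gradient (f i) (z i) - gradient (f i) xstar)
        = ((B i - fderiv ℝ (gradient (f i)) xstar) (z i - xstar))
          + (fderiv ℝ (gradient (f i)) xstar (z i - xstar)
            - (gradient (f i) (z i) - gradient (f i) xstar)) := by
      simp [ContinuousLinearMap.sub_apply]
    rw [this]
    refine le_trans (norm_add_le _ _) ?_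
    rw [add_comm]
    gcongr
    calc ‖fderiv ℝ (gradient (f i)) xstar (z i - xstar)
        - (gradient (f i) (z i) - gradient (f i) xstar)‖
        = ‖gradient (f i) (z i) - gradient (f i) xstar
          - fderiv ℝ (gradient (f i)) xstar (z i - xstar)‖ := by rw [norm_sub_rev]
      _ ≤ Lt * ‖z i - xstar‖ ^ 2 := key i
  have step3 : ∑ i, ‖B i (z i - xstar) - (gradient (f i) (z i) - gradient (f i) xstar)‖
      ≤ Lt * ∑ i, ‖z i - xstar‖ ^ 2
        + ∑ i, ‖(B i - fderiv ℝ (gradient (f i)) xstar) (z i - xstar)‖ := by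
    rw [Finset.mul_sum, ← Finset.sum_add_distrib]
    exact Finset.sum_le_sum fun i _ => step2 i
  have hΓ : (0 : ℝ) ≤ ‖Ainv‖ := norm_nonneg _
  calc ‖x - xstar‖ ≤ ‖Ainv‖ * ((1 / (n : ℝ)) *
        ∑ i, ‖B i (z i - xstar) - (gradient (f i) (z i) - gradient (f i) xstar)‖) := step1
    _ ≤ ‖Ainv‖ * ((1 / (n : ℝ)) * (Lt * ∑ i, ‖z i - xstar‖ ^ 2
        + ∑ i, ‖(B i - fderiv ℝ (gradient (f i)) xstar) (z i - xstar)‖)) := by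
        gcongr
    _ = (Lt * ‖Ainv‖ / n) * ∑ i, ‖z i - xstar‖ ^ 2
        + (‖Ainv‖ / n) * ∑ i, ‖(B i - fderiv ℝ (gradient (f i)) xstar) (z i - xstar)‖ := by
        ring
end
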